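/- arXiv:2005.13758 — 2 statements merged into one kernel-verified Lean document; each statement's English description precedes it below -/
import Mathlib

section
/- Let d ≥ 2 be an integer, let p ∈ [1,∞) satisfy d − p(d−2) > 0, and let β satisfy 0 ≤ β < d − p(d−2). Then the measure |x|^{−β} dx belongs to the L^p-Kato class K^p for the Gaussian heat kernel, i.e. lim_{α→∞} sup_{x∈ℝ^d} ∫_{ℝ^d} r_α(x,y)^p |y|^{−β} dy = 0. -/
open MeasureTheory ENNReal Set Filter

/-- The Gaussian (Brownian) heat kernel on `ℝ^d`. -/
noncomputable def gaussianKernel (d : ℕ) (t : ℝ)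
    (x y : EuclideanSpace ℝ (Fin d)) : ℝ≥0∞ :=
  ENNReal.ofReal ((2 * Real.pi * t) ^ (-(d:ℝ) / 2) *
    Real.exp (-(dist x y ^ 2) / (2 * t)))

/-- The α-order resolvent kernel of the Gaussian heat kernel on `ℝ^d`. -/
noncomputable def gaussianResolvent (d : ℕ) (α : ℝ)
    (x y : EuclideanSpace ℝ (Fin d)) : ℝ≥0∞ :=
  ∫⁻ t in Set.Ioi (0:ℝ), ENNReal.ofReal (Real.exp (-(α * t))) * gaussianKernel d t x y

/-! ### Auxiliary real inequalities -/

lemma kato_exp_le (a u : ℝ) (ha : 0 < a) (hu : 0 < u) :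
    Real.exp (-u) ≤ a ^ a * u ^ (-a) := by
  have h1 : Real.log (u / a) ≤ u / a - 1 := Real.log_le_sub_one_of_pos (by positivity)
  have h2 : a * Real.log u - a * Real.log a ≤ u := by
    have h := mul_le_mul_of_nonneg_left h1 ha.le
    rw [Real.log_div hu.ne' ha.ne'] at h
    have hc : a * (u / a) = u := by field_simp
    nlinarith
  have h3 : Real.exp (-u) * u ^ a ≤ a ^ a := by
    rw [Real.rpow_def_of_pos hu, Real.rpow_def_of_pos ha, ← Real.exp_add]
    exact Real.exp_le_exp.2 (by linarith)
  have hupos : (0:ℝ) < u ^ a := Real.rpow_pos_of_pos hu a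
  rw [Real.rpow_neg hu.le]
  calc Real.exp (-u) = Real.exp (-u) * u ^ a * (u ^ a)⁻¹ := by field_simp
    _ ≤ a ^ a * (u ^ a)⁻¹ := by gcongr

lemma kato_amgm (t R : ℝ) (ht : 0 < t) (hR : 0 ≤ R) :
    R / Real.sqrt 2 ≤ t / 2 + R ^ 2 / (4 * t) := by
  have hs : (0:ℝ) < Real.sqrt 2 := Real.sqrt_pos.2 two_pos
  have hs2 : Real.sqrt 2 ^ 2 = 2 := Real.sq_sqrt (by norm_num)
  rw [div_le_iff₀ hs]
  have h4t : (0:ℝ) < 4 * t := by linarith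
  rw [← mul_le_mul_iff_of_pos_right h4t]
  have expand : (t/2 + R^2/(4*t)) * Real.sqrt 2 * (4*t)
      = 2*Real.sqrt 2*t^2 + Real.sqrt 2*R^2 := by
    field_simp
    ring
  rw [expand]
  have key3 : 2*Real.sqrt 2*t^2 - 4*t*R + Real.sqrt 2*R^2
      = Real.sqrt 2 * (Real.sqrt 2*t - R)^2 := by
    linear_combination (-(Real.sqrt 2*t^2) + 2*t*R) * hs2
  nlinarith [key3, mul_nonneg hs.le (sq_nonneg (Real.sqrt 2*t - R))]

/-- The core pointwise estimate on the heat kernel integrand. -/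
lemma kato_core (d : ℕ) (a t R : ℝ) (ha : 0 < a) (ht : 0 < t) (hR : 0 < R) :
    Real.exp (-(1*t)) * ((2*Real.pi*t) ^ (-(d:ℝ)/2) * Real.exp (-(R^2)/(2*t)))
      ≤ ((2*Real.pi) ^ (-(d:ℝ)/2) * (4*a) ^ a) *
        (Real.exp (-(R / Real.sqrt 2)) * R ^ (-(2*a))) *
        (Real.exp (-(t/2)) * t ^ (a - (d:ℝ)/2)) := by
  have e1 : (2*Real.pi*t) ^ (-(d:ℝ)/2) = (2*Real.pi) ^ (-(d:ℝ)/2) * t ^ (-(d:ℝ)/2) :=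
    Real.mul_rpow (by positivity) ht.le
  have e2 : Real.exp (-(1*t)) * Real.exp (-(R^2)/(2*t))
      = Real.exp (-(t/2 + R^2/(4*t))) * (Real.exp (-(t/2)) * Real.exp (-(R^2/(4*t)))) := by
    rw [← Real.exp_add, ← Real.exp_add, ← Real.exp_add]
    congr 1
    field_simp
    ring
  have e3 : Real.exp (-(t/2 + R^2/(4*t))) ≤ Real.exp (-(R / Real.sqrt 2)) :=
    Real.exp_le_exp.2 (neg_le_neg (kato_amgm t R ht hR.le))
  have e4 : Real.exp (-(R^2/(4*t))) ≤ a ^ a * (R^2/(4*t)) ^ (-a) :=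
    kato_exp_le a _ ha (by positivity)
  have e5 : (R^2/(4*t)) ^ (-a) = R ^ (-(2*a)) * (4 ^ a * t ^ a) := by
    rw [Real.div_rpow (sq_nonneg R) (by positivity : (0:ℝ) ≤ 4*t),
      Real.rpow_neg (by positivity : (0:ℝ) ≤ 4*t), div_eq_mul_inv, inv_inv,
      Real.mul_rpow (by norm_num : (0:ℝ) ≤ 4) ht.le,
      ← Real.rpow_natCast R 2, ← Real.rpow_mul hR.le]
    norm_num
  have e7 : t ^ (a - (d:ℝ)/2) = t ^ a * t ^ (-(d:ℝ)/2) := by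
    rw [← Real.rpow_add ht]; ring_nf
  have e6 : (4*a) ^ a = 4 ^ a * a ^ a := Real.mul_rpow (by norm_num) ha.le
  calc Real.exp (-(1*t)) * ((2*Real.pi*t) ^ (-(d:ℝ)/2) * Real.exp (-(R^2)/(2*t)))
      = ((2*Real.pi) ^ (-(d:ℝ)/2) * t ^ (-(d:ℝ)/2)) *
        (Real.exp (-(t/2 + R^2/(4*t))) * (Real.exp (-(t/2)) * Real.exp (-(R^2/(4*t))))) := by
        rw [e1]
        linear_combination ((2*Real.pi) ^ (-(d:ℝ)/2) * t ^ (-(d:ℝ)/2)) * e2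
    _ ≤ ((2*Real.pi) ^ (-(d:ℝ)/2) * t ^ (-(d:ℝ)/2)) *
        (Real.exp (-(R / Real.sqrt 2)) * (Real.exp (-(t/2)) * (a ^ a * (R^2/(4*t)) ^ (-a)))) := by
        have hfac : (0:ℝ) ≤ (2*Real.pi) ^ (-(d:ℝ)/2) * t ^ (-(d:ℝ)/2) := by positivity
        refine mul_le_mul_of_nonneg_left ?_ hfac
        refine mul_le_mul e3 (mul_le_mul_of_nonneg_left e4 (Real.exp_nonneg _)) (by positivity)
          (Real.exp_nonneg _)
    _ = ((2*Real.pi) ^ (-(d:ℝ)/2) * (4*a) ^ a) *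
        (Real.exp (-(R / Real.sqrt 2)) * R ^ (-(2*a))) *
        (Real.exp (-(t/2)) * t ^ (a - (d:ℝ)/2)) := by
        rw [e5, e6, e7]; ring

/-! ### ENNReal helper -/

lemma kato_rpow_anti {x y : ℝ≥0∞} (h : x ≤ y) {η : ℝ} (hη : 0 ≤ η) :
    y ^ (-η) ≤ x ^ (-η) := by
  rw [ENNReal.rpow_neg, ENNReal.rpow_neg]
  exact ENNReal.inv_le_inv.2 (ENNReal.rpow_le_rpow h hη)

/-! ### One-dimensional substitution -/

lemma kato_lintegral_Ioi_mul (c : ℝ) (hc : 0 < c) (f : ℝ → ℝ≥0∞) :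
    ∫⁻ t in Ioi (0:ℝ), f (c * t) = ENNReal.ofReal c⁻¹ * ∫⁻ s in Ioi (0:ℝ), f s := by
  have hemb : MeasurableEmbedding (fun t : ℝ => c * t) :=
    (Homeomorph.mulLeft₀ c hc.ne').measurableEmbedding
  have hpre : (fun t : ℝ => c * t) ⁻¹' Ioi (0:ℝ) = Ioi (0:ℝ) := by
    ext t
    simp only [mem_preimage, mem_Ioi]
    constructor
    · intro h; nlinarith
    · intro h; positivity
  calc ∫⁻ t in Ioi (0:ℝ), f (c * t)
      = ∫⁻ s, f s ∂(Measure.map (fun t : ℝ => c * t) (volume.restrict (Ioi 0))) :=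
        (hemb.lintegral_map f).symm
    _ = ∫⁻ s in Ioi (0:ℝ), f s ∂(Measure.map (fun t : ℝ => c * t) volume) := by
        rw [hemb.restrict_map volume (Ioi 0), hpre]
    _ = ENNReal.ofReal c⁻¹ * ∫⁻ s in Ioi (0:ℝ), f s := by
        rw [Real.map_volume_mul_left hc.ne', abs_of_pos (inv_pos.2 hc),
          Measure.restrict_smul, lintegral_smul_measure, smul_eq_mul]

/-! ### Scaling of the resolvent -/

lemma kato_kernel_scaling (d : ℕ) {α t : ℝ} (hα : 0 < α) (ht : 0 < t)
    (x y : EuclideanSpace ℝ (Fin d)) :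
    gaussianKernel d (α * t) (Real.sqrt α • x) (Real.sqrt α • y)
      = ENNReal.ofReal (α ^ (-(d:ℝ)/2)) * gaussianKernel d t x y := by
  have hc : 0 < Real.sqrt α := Real.sqrt_pos.2 hα
  have hc2 : Real.sqrt α ^ 2 = α := Real.sq_sqrt hα.le
  have hdist : dist (Real.sqrt α • x) (Real.sqrt α • y) = Real.sqrt α * dist x y := by
    rw [dist_smul₀, Real.norm_eq_abs, abs_of_pos hc]
  unfold gaussianKernel
  rw [hdist, ← ENNReal.ofReal_mul (by positivity)]
  congr 1
  have h1 : (2 * Real.pi * (α * t)) ^ (-(d:ℝ)/2)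
      = α ^ (-(d:ℝ)/2) * (2 * Real.pi * t) ^ (-(d:ℝ)/2) := by
    rw [show 2 * Real.pi * (α * t) = α * (2 * Real.pi * t) by ring,
      Real.mul_rpow hα.le (by positivity)]
  have h2 : -((Real.sqrt α * dist x y) ^ 2) / (2 * (α * t)) = -(dist x y ^ 2) / (2 * t) := by
    rw [mul_pow, hc2]
    field_simp
  rw [h1, h2]
  ring

lemma kato_resolvent_scaling (d : ℕ) {α : ℝ} (hα : 0 < α)
    (x y : EuclideanSpace ℝ (Fin d)) :
    gaussianResolvent d α x y
      = ENNReal.ofReal (α ^ ((d:ℝ)/2 - 1)) *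
        gaussianResolvent d 1 (Real.sqrt α • x) (Real.sqrt α • y) := by
  unfold gaussianResolvent
  set f : ℝ → ℝ≥0∞ := fun s => ENNReal.ofReal (Real.exp (-(1 * s))) *
      gaussianKernel d s (Real.sqrt α • x) (Real.sqrt α • y) with hfdef
  have hresc : ∫⁻ s in Ioi (0:ℝ), f s = ENNReal.ofReal α * ∫⁻ t in Ioi (0:ℝ), f (α * t) := by
    rw [kato_lintegral_Ioi_mul α hα f, ← mul_assoc, ← ENNReal.ofReal_mul hα.le,
      mul_inv_cancel₀ hα.ne', ENNReal.ofReal_one, one_mul]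
  rw [hresc]
  have hcong : ∫⁻ t in Ioi (0:ℝ), f (α * t)
      = ∫⁻ t in Ioi (0:ℝ),
        ENNReal.ofReal (α ^ (-(d:ℝ)/2)) *
          (ENNReal.ofReal (Real.exp (-(α * t))) * gaussianKernel d t x y) := by
    refine setLIntegral_congr_fun measurableSet_Ioi (fun t ht => ?_)
    rw [hfdef]
    simp only []
    rw [kato_kernel_scaling d hα ht, one_mul]
    ring
  rw [hcong, lintegral_const_mul' _ _ ENNReal.ofReal_ne_top, ← mul_assoc, ← mul_assoc,
    ← ENNReal.ofReal_mul (by positivity), ← ENNReal.ofReal_mul (by positivity)]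
  have heq1 : α ^ ((d:ℝ)/2 - 1) * α * α ^ (-(d:ℝ)/2) = 1 := by
    calc α ^ ((d:ℝ)/2 - 1) * α * α ^ (-(d:ℝ)/2)
        = (α ^ ((d:ℝ)/2 - 1) * α ^ (-(d:ℝ)/2)) * α := by ring
      _ = α ^ (-1:ℝ) * α := by
          rw [← Real.rpow_add hα]
          congr 1
          ring
      _ = 1 := by
          rw [Real.rpow_neg_one]
          field_simp
  rw [heq1, ENNReal.ofReal_one, one_mul]

/-! ### The key upper bound on the 1-resolvent -/

lemma kato_resolvent_le (d : ℕ) (a : ℝ) (ha : 0 < a)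
    (x z : EuclideanSpace ℝ (Fin d)) :
    gaussianResolvent d 1 x z ≤
      (ENNReal.ofReal ((2*Real.pi) ^ (-(d:ℝ)/2) * (4*a) ^ a) *
        ((∫⁻ t in Ioi (0:ℝ), ENNReal.ofReal (Real.exp (-(t/2)) * t ^ (a - (d:ℝ)/2))) + 1)) *
      (ENNReal.ofReal (Real.exp (-(dist x z / Real.sqrt 2))) *
        ENNReal.ofReal (dist x z) ^ (-(2*a))) := by
  set J : ℝ≥0∞ := ∫⁻ t in Ioi (0:ℝ), ENNReal.ofReal (Real.exp (-(t/2)) * t ^ (a - (d:ℝ)/2))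
    with hJ
  set C0 : ℝ := (2*Real.pi) ^ (-(d:ℝ)/2) * (4*a) ^ a with hC0
  have hC0pos : 0 < C0 := by rw [hC0]; positivity
  rcases eq_or_lt_of_le (dist_nonneg : 0 ≤ dist x z) with h0 | hR
  · have htop : ENNReal.ofReal (dist x z) ^ (-(2*a)) = ⊤ := by
      rw [← h0, ENNReal.ofReal_zero]
      exact ENNReal.zero_rpow_of_neg (by linarith)
    rw [htop]
    have h1 : ENNReal.ofReal (Real.exp (-(dist x z / Real.sqrt 2))) ≠ 0 :=
      (ENNReal.ofReal_pos.2 (Real.exp_pos _)).ne'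
    have h2 : ENNReal.ofReal C0 * (J + 1) ≠ 0 := by
      apply mul_ne_zero (ENNReal.ofReal_pos.2 hC0pos).ne'
      simp
    rw [ENNReal.mul_top h1, ENNReal.mul_top h2]
    exact le_top
  · have hmono : gaussianResolvent d 1 x z ≤
        ∫⁻ t in Ioi (0:ℝ),
          ENNReal.ofReal ((C0 * (Real.exp (-(dist x z / Real.sqrt 2)) * dist x z ^ (-(2*a)))) *
            (Real.exp (-(t/2)) * t ^ (a - (d:ℝ)/2))) := by
      unfold gaussianResolvent
      refine lintegral_mono_ae ?_
      filter_upwards [ae_restrict_mem measurableSet_Ioi] with t ht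
      have ht0 : 0 < t := ht
      unfold gaussianKernel
      rw [← ENNReal.ofReal_mul (Real.exp_nonneg _)]
      apply ENNReal.ofReal_le_ofReal
      have hcore := kato_core d a t (dist x z) ha ht0 hR
      rw [hC0]
      exact hcore
    refine hmono.trans ?_
    have heq : ∫⁻ t in Ioi (0:ℝ),
        ENNReal.ofReal ((C0 * (Real.exp (-(dist x z / Real.sqrt 2)) * dist x z ^ (-(2*a)))) *
          (Real.exp (-(t/2)) * t ^ (a - (d:ℝ)/2)))
        = ENNReal.ofReal (C0 * (Real.exp (-(dist x z / Real.sqrt 2)) * dist x z ^ (-(2*a)))) * J := by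
      rw [hJ, ← lintegral_const_mul' _ _ ENNReal.ofReal_ne_top]
      refine setLIntegral_congr_fun measurableSet_Ioi (fun t ht => ?_)
      rw [← ENNReal.ofReal_mul (by positivity)]
    rw [heq]
    have hsplit : ENNReal.ofReal (C0 * (Real.exp (-(dist x z / Real.sqrt 2)) *
          dist x z ^ (-(2*a))))
        = ENNReal.ofReal C0 * (ENNReal.ofReal (Real.exp (-(dist x z / Real.sqrt 2))) *
            ENNReal.ofReal (dist x z) ^ (-(2*a))) := by
      rw [ENNReal.ofReal_mul hC0pos.le, ENNReal.ofReal_mul (Real.exp_nonneg _),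
        ENNReal.ofReal_rpow_of_pos hR]
    rw [hsplit]
    calc ENNReal.ofReal C0 * (ENNReal.ofReal (Real.exp (-(dist x z / Real.sqrt 2))) *
            ENNReal.ofReal (dist x z) ^ (-(2*a))) * J
        = (ENNReal.ofReal C0 * J) * (ENNReal.ofReal (Real.exp (-(dist x z / Real.sqrt 2))) *
            ENNReal.ofReal (dist x z) ^ (-(2*a))) := by ring
      _ ≤ (ENNReal.ofReal C0 * (J + 1)) * (ENNReal.ofReal (Real.exp (-(dist x z / Real.sqrt 2))) *
            ENNReal.ofReal (dist x z) ^ (-(2*a))) := by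
          gcongr
          exact le_self_add

/-! ### Finiteness of the time integral -/

lemma kato_gamma_fin (s : ℝ) (hs : -1 < s) :
    ∫⁻ t in Ioi (0:ℝ), ENNReal.ofReal (Real.exp (-(t/2)) * t ^ s) < ⊤ := by
  have h : IntegrableOn (fun t : ℝ => t ^ s * Real.exp (-(1/2) * t ^ (1:ℝ))) (Ioi 0) :=
    integrableOn_rpow_mul_exp_neg_mul_rpow hs one_pos (by norm_num)
  have h2 := h.lintegral_lt_top
  refine lt_of_le_of_lt (le_of_eq ?_) h2
  refine lintegral_congr fun t => ?_
  congr 1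
  rw [Real.rpow_one]
  ring_nf

/-! ### Finiteness of the radial majorant integral -/

lemma kato_ball_fin (d : ℕ) (hd : 2 ≤ d) (η : ℝ) (hη0 : 0 ≤ η) (hηd : η < d) :
    ∫⁻ w in Metric.ball (0 : EuclideanSpace ℝ (Fin d)) 1,
      (ENNReal.ofReal ‖w‖) ^ (-η) ∂volume < ⊤ := by
  haveI : NeZero d := ⟨by omega⟩
  set f : EuclideanSpace ℝ (Fin d) → ℝ≥0∞ := fun w => (ENNReal.ofReal ‖w‖) ^ (-η) with hf
  set A : ℕ → Set (EuclideanSpace ℝ (Fin d)) := fun k =>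
    Metric.closedBall 0 ((1/2:ℝ) ^ k) \ Metric.ball 0 ((1/2:ℝ) ^ (k+1)) with hA
  have cover : Metric.ball (0:EuclideanSpace ℝ (Fin d)) 1 ⊆ {0} ∪ ⋃ k, A k := by
    intro w hw
    by_cases hw0 : w = 0
    · exact Or.inl (by simp [hw0])
    right
    have hnorm : 0 < ‖w‖ := norm_pos_iff.2 hw0
    have hlt1 : ‖w‖ < 1 := mem_ball_zero_iff.1 hw
    have hex : ∃ n : ℕ, (1/2:ℝ) ^ n < ‖w‖ :=
      exists_pow_lt_of_lt_one hnorm (by norm_num)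
    have hn := Nat.find_spec hex
    have hn0 : Nat.find hex ≠ 0 := by
      intro h
      rw [h] at hn
      simp at hn
      linarith
    obtain ⟨k, hk⟩ : ∃ k, Nat.find hex = k + 1 :=
      ⟨Nat.find hex - 1, (Nat.succ_pred_eq_of_pos (Nat.pos_of_ne_zero hn0)).symm⟩
    refine mem_iUnion.2 ⟨k, ?_, ?_⟩
    · rw [Metric.mem_closedBall, dist_zero_right]
      have hkk : k < Nat.find hex := by omega
      have := Nat.find_min hex hkk
      linarith [not_lt.1 this]
    · rw [Metric.mem_ball, dist_zero_right]
      rw [hk] at hn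
      exact not_lt.2 hn.le
  have hub : ∀ k : ℕ, ∫⁻ w in A k, f w ∂volume ≤
      (ENNReal.ofReal ((1/2:ℝ) ^ (k+1))) ^ (-η) *
        (ENNReal.ofReal (((1/2:ℝ) ^ k) ^ d) *
          volume (Metric.ball (0:EuclideanSpace ℝ (Fin d)) 1)) := by
    intro k
    calc ∫⁻ w in A k, f w ∂volume
        ≤ ∫⁻ _ in A k, (ENNReal.ofReal ((1/2:ℝ) ^ (k+1))) ^ (-η) ∂volume := by
          refine lintegral_mono_ae ?_
          filter_upwards [ae_restrict_mem (measurableSet_closedBall.diff Metric.isOpen_ball.measurableSet)]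
            with w hw
          have hge : (1/2:ℝ) ^ (k+1) ≤ ‖w‖ := by
            have h := hw.2
            rw [Metric.mem_ball, dist_zero_right, not_lt] at h
            exact h
          exact kato_rpow_anti (ENNReal.ofReal_le_ofReal hge) hη0
      _ = (ENNReal.ofReal ((1/2:ℝ) ^ (k+1))) ^ (-η) * volume (A k) := setLIntegral_const _ _
      _ ≤ (ENNReal.ofReal ((1/2:ℝ) ^ (k+1))) ^ (-η) *
            (ENNReal.ofReal (((1/2:ℝ) ^ k) ^ d) *
              volume (Metric.ball (0:EuclideanSpace ℝ (Fin d)) 1)) := by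
          gcongr
          calc volume (A k)
              ≤ volume (Metric.closedBall (0:EuclideanSpace ℝ (Fin d)) ((1/2:ℝ) ^ k)) :=
                measure_mono diff_subset
            _ = ENNReal.ofReal (((1/2:ℝ) ^ k) ^ Module.finrank ℝ (EuclideanSpace ℝ (Fin d))) *
                  volume (Metric.ball (0:EuclideanSpace ℝ (Fin d)) 1) :=
                Measure.addHaar_closedBall _ _ (by positivity)
            _ = ENNReal.ofReal (((1/2:ℝ) ^ k) ^ d) *
                  volume (Metric.ball (0:EuclideanSpace ℝ (Fin d)) 1) := by
                rw [finrank_euclideanSpace_fin]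
  set q : ℝ := (1/2:ℝ) ^ (-η) with hq
  have hqpos : 0 < q := Real.rpow_pos_of_pos (by norm_num) _
  set ρ : ℝ := q * (1/2:ℝ) ^ d with hρ
  have hρ0 : 0 ≤ ρ := by positivity
  have hρ1 : ρ < 1 := by
    have heq2 : ρ = (1/2:ℝ) ^ ((d:ℝ) - η) := by
      rw [hρ, hq, ← Real.rpow_natCast ((1:ℝ)/2) d, ← Real.rpow_add (by norm_num)]
      ring_nf
    rw [heq2]
    exact Real.rpow_lt_one (by norm_num) (by norm_num) (by linarith)
  have hterm : ∀ k : ℕ, (ENNReal.ofReal ((1/2:ℝ) ^ (k+1))) ^ (-η)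
      = ENNReal.ofReal (q ^ (k+1)) := by
    intro k
    rw [ENNReal.ofReal_rpow_of_pos (by positivity)]
    congr 1
    rw [hq, ← Real.rpow_natCast ((1/2:ℝ) ^ (-η)) (k+1), ← Real.rpow_mul (by norm_num),
      ← Real.rpow_natCast ((1:ℝ)/2) (k+1), ← Real.rpow_mul (by norm_num)]
    ring_nf
  have hsum : ∑' k : ℕ, ((ENNReal.ofReal ((1/2:ℝ) ^ (k+1))) ^ (-η) *
      (ENNReal.ofReal (((1/2:ℝ) ^ k) ^ d) *
        volume (Metric.ball (0:EuclideanSpace ℝ (Fin d)) 1))) < ⊤ := by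
    have heq3 : ∀ k : ℕ, (ENNReal.ofReal ((1/2:ℝ) ^ (k+1))) ^ (-η) *
        (ENNReal.ofReal (((1/2:ℝ) ^ k) ^ d) *
          volume (Metric.ball (0:EuclideanSpace ℝ (Fin d)) 1))
        = (ENNReal.ofReal q * volume (Metric.ball (0:EuclideanSpace ℝ (Fin d)) 1)) *
            ENNReal.ofReal ρ ^ k := by
      intro k
      rw [hterm k]
      have h1 : ((1/2:ℝ) ^ k) ^ d = ((1/2:ℝ) ^ d) ^ k := by
        rw [← pow_mul, ← pow_mul, Nat.mul_comm]
      have h2 : ENNReal.ofReal ρ ^ k = ENNReal.ofReal (q ^ k * ((1/2:ℝ) ^ d) ^ k) := by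
        rw [← ENNReal.ofReal_pow hρ0, hρ, mul_pow]
      rw [h1, h2, pow_succ, ENNReal.ofReal_mul (by positivity : (0:ℝ) ≤ q ^ k),
        ENNReal.ofReal_mul (by positivity : (0:ℝ) ≤ q ^ k)]
      ring
    rw [tsum_congr heq3, ENNReal.tsum_mul_left, ENNReal.tsum_geometric]
    have hρlt : ENNReal.ofReal ρ < 1 := ENNReal.ofReal_lt_one.2 hρ1
    have hne : (1 - ENNReal.ofReal ρ) ≠ 0 := by
      simp only [ne_eq, tsub_eq_zero_iff_le, not_le]
      exact hρlt
    apply ENNReal.mul_lt_top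
    · exact ENNReal.mul_lt_top ENNReal.ofReal_lt_top measure_ball_lt_top
    · exact ENNReal.inv_lt_top.2 (pos_iff_ne_zero.2 hne)
  calc ∫⁻ w in Metric.ball (0:EuclideanSpace ℝ (Fin d)) 1, f w ∂volume
      ≤ ∫⁻ w in {(0:EuclideanSpace ℝ (Fin d))} ∪ ⋃ k, A k, f w ∂volume :=
        lintegral_mono_set cover
    _ ≤ ∫⁻ w in {(0:EuclideanSpace ℝ (Fin d))}, f w ∂volume + ∫⁻ w in ⋃ k, A k, f w ∂volume :=
        lintegral_union_le _ _ _
    _ ≤ 0 + ∑' k : ℕ, ((ENNReal.ofReal ((1/2:ℝ) ^ (k+1))) ^ (-η) *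
          (ENNReal.ofReal (((1/2:ℝ) ^ k) ^ d) *
            volume (Metric.ball (0:EuclideanSpace ℝ (Fin d)) 1))) := by
        refine add_le_add (le_of_eq ?_) ((lintegral_iUnion_le _ _).trans (ENNReal.tsum_le_tsum hub))
        exact setLIntegral_measure_zero _ _ (measure_singleton 0)
    _ < ⊤ := by rw [zero_add]; exact hsum

lemma kato_exp_fin (d : ℕ) (hd : 2 ≤ d) (c : ℝ) (hc : 0 < c) :
    ∫⁻ w : EuclideanSpace ℝ (Fin d), ENNReal.ofReal (Real.exp (-(c * ‖w‖))) ∂volume < ⊤ := by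
  set m : ℝ := (d:ℝ) + 1 with hm
  have hm0 : 0 < m := by positivity
  set ε : ℝ := c / m with hε
  have hε0 : 0 < ε := by positivity
  set K : ℝ := (1 + ε⁻¹) ^ m with hK
  have hKpos : 0 < K := by rw [hK]; positivity
  have hpt : ∀ w : EuclideanSpace ℝ (Fin d),
      Real.exp (-(c * ‖w‖)) ≤ K * (1 + ‖w‖) ^ (-m) := by
    intro w
    have hr0 : 0 ≤ ‖w‖ := norm_nonneg w
    set r := ‖w‖ with hr
    have h1 : 1 + r ≤ (1 + ε⁻¹) * Real.exp (ε * r) := by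
      have hexp := Real.add_one_le_exp (ε * r)
      have hmul := mul_le_mul_of_nonneg_left hexp (by positivity : (0:ℝ) ≤ 1 + ε⁻¹)
      have hid : (1 + ε⁻¹) * (ε * r + 1) = ε * r + 1 + r + ε⁻¹ := by
        field_simp
        ring
      linarith [hmul, hid, mul_nonneg hε0.le hr0, (inv_pos.2 hε0).le]
    have h3 : (1 + r) ^ m ≤ K * Real.exp (c * r) := by
      calc (1 + r) ^ m ≤ ((1 + ε⁻¹) * Real.exp (ε * r)) ^ m :=
            Real.rpow_le_rpow (by positivity) h1 hm0.le
        _ = K * Real.exp (c * r) := by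
            rw [Real.mul_rpow (by positivity) (Real.exp_nonneg _), hK, ← Real.exp_mul]
            congr 2
            rw [hε]
            field_simp
    have h4 : (0:ℝ) < (1 + r) ^ m := by positivity
    rw [Real.rpow_neg (by positivity : (0:ℝ) ≤ 1 + r), ← div_eq_mul_inv, le_div_iff₀ h4]
    calc Real.exp (-(c * r)) * (1 + r) ^ m
        ≤ Real.exp (-(c * r)) * (K * Real.exp (c * r)) :=
          mul_le_mul_of_nonneg_left h3 (Real.exp_nonneg _)
      _ = K * (Real.exp (-(c * r)) * Real.exp (c * r)) := by ring
      _ = K := by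
          rw [← Real.exp_add]
          simp
  calc ∫⁻ w : EuclideanSpace ℝ (Fin d), ENNReal.ofReal (Real.exp (-(c * ‖w‖))) ∂volume
      ≤ ∫⁻ w : EuclideanSpace ℝ (Fin d), ENNReal.ofReal (K * (1 + ‖w‖) ^ (-m)) ∂volume :=
        lintegral_mono fun w => ENNReal.ofReal_le_ofReal (hpt w)
    _ = ENNReal.ofReal K *
          ∫⁻ w : EuclideanSpace ℝ (Fin d), ENNReal.ofReal ((1 + ‖w‖) ^ (-m)) ∂volume := by
        rw [← lintegral_const_mul' _ _ ENNReal.ofReal_ne_top]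
        refine lintegral_congr fun w => ?_
        rw [← ENNReal.ofReal_mul hKpos.le]
    _ < ⊤ := by
        refine ENNReal.mul_lt_top ENNReal.ofReal_lt_top ?_
        refine finite_integral_one_add_norm ?_
        rw [finrank_euclideanSpace_fin, hm]
        linarith

lemma kato_theta_fin (d : ℕ) (hd : 2 ≤ d) (c η₁ β : ℝ) (hc : 0 < c) (hη₁ : 0 ≤ η₁)
    (hβ0 : 0 ≤ β) (hηd : η₁ + β < (d:ℝ)) :
    ∫⁻ w : EuclideanSpace ℝ (Fin d),
      ENNReal.ofReal (Real.exp (-(c * ‖w‖))) * (ENNReal.ofReal ‖w‖) ^ (-η₁) *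
        (ENNReal.ofReal ‖w‖) ^ (-β) ∂volume < ⊤ := by
  haveI : NeZero d := ⟨by omega⟩
  set Θ : EuclideanSpace ℝ (Fin d) → ℝ≥0∞ := fun w =>
    ENNReal.ofReal (Real.exp (-(c * ‖w‖))) * (ENNReal.ofReal ‖w‖) ^ (-η₁) *
      (ENNReal.ofReal ‖w‖) ^ (-β) with hΘ
  rw [← lintegral_add_compl (fun w => Θ w) Metric.isOpen_ball.measurableSet
    (A := Metric.ball (0:EuclideanSpace ℝ (Fin d)) 1)]
  refine ENNReal.add_lt_top.2 ⟨?_, ?_⟩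
  · -- inside the unit ball
    have hmono : ∫⁻ w in Metric.ball (0:EuclideanSpace ℝ (Fin d)) 1, Θ w ∂volume
        ≤ ∫⁻ w in Metric.ball (0:EuclideanSpace ℝ (Fin d)) 1,
            (ENNReal.ofReal ‖w‖) ^ (-(η₁ + β)) ∂volume := by
      refine lintegral_mono_ae ?_
      have h0 : ∀ᵐ w : EuclideanSpace ℝ (Fin d) ∂volume, w ≠ 0 := by
        rw [ae_iff]
        simp only [ne_eq, not_not, setOf_eq_eq_singleton]
        exact measure_singleton 0
      filter_upwards [ae_restrict_of_ae h0] with w hw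
      have hx0 : ENNReal.ofReal ‖w‖ ≠ 0 := (ENNReal.ofReal_pos.2 (norm_pos_iff.2 hw)).ne'
      have hxt : ENNReal.ofReal ‖w‖ ≠ ⊤ := ENNReal.ofReal_ne_top
      simp only [hΘ]
      calc ENNReal.ofReal (Real.exp (-(c * ‖w‖))) * (ENNReal.ofReal ‖w‖) ^ (-η₁) *
            (ENNReal.ofReal ‖w‖) ^ (-β)
          ≤ 1 * (ENNReal.ofReal ‖w‖) ^ (-η₁) * (ENNReal.ofReal ‖w‖) ^ (-β) := by
            gcongr
            refine ENNReal.ofReal_le_one.2 ?_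
            rw [Real.exp_le_one_iff]
            have : 0 ≤ c * ‖w‖ := by positivity
            linarith
        _ = (ENNReal.ofReal ‖w‖) ^ (-(η₁ + β)) := by
            rw [one_mul, ← ENNReal.rpow_add _ _ hx0 hxt]
            congr 1
            ring
    refine lt_of_le_of_lt hmono ?_
    exact kato_ball_fin d hd (η₁ + β) (by positivity) hηd
  · -- outside the unit ball
    have hmono : ∫⁻ w in (Metric.ball (0:EuclideanSpace ℝ (Fin d)) 1)ᶜ, Θ w ∂volume
        ≤ ∫⁻ w in (Metric.ball (0:EuclideanSpace ℝ (Fin d)) 1)ᶜ,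
            ENNReal.ofReal (Real.exp (-(c * ‖w‖))) ∂volume := by
      refine lintegral_mono_ae ?_
      filter_upwards [ae_restrict_mem Metric.isOpen_ball.measurableSet.compl] with w hw
      have hge : (1:ℝ) ≤ ‖w‖ := by
        have := hw
        rw [mem_compl_iff, Metric.mem_ball, dist_zero_right, not_lt] at this
        exact this
      have h1 : (ENNReal.ofReal ‖w‖) ^ (-η₁) ≤ 1 := by
        have := kato_rpow_anti (x := 1) (y := ENNReal.ofReal ‖w‖)
          (by simpa using ENNReal.ofReal_le_ofReal hge ) hη₁
        simpa using this
      have h2 : (ENNReal.ofReal ‖w‖) ^ (-β) ≤ 1 := by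
        have := kato_rpow_anti (x := 1) (y := ENNReal.ofReal ‖w‖)
          (by simpa using ENNReal.ofReal_le_ofReal hge ) hβ0
        simpa using this
      simp only [hΘ]
      calc ENNReal.ofReal (Real.exp (-(c * ‖w‖))) * (ENNReal.ofReal ‖w‖) ^ (-η₁) *
            (ENNReal.ofReal ‖w‖) ^ (-β)
          ≤ ENNReal.ofReal (Real.exp (-(c * ‖w‖))) * 1 * 1 := by gcongr
        _ = ENNReal.ofReal (Real.exp (-(c * ‖w‖))) := by ring
    refine lt_of_le_of_lt hmono ?_
    refine lt_of_le_of_lt (setLIntegral_le_lintegral _ _) ?_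
    exact kato_exp_fin d hd c hc

/-! ### Finiteness of the supremum at `α = 1` -/

lemma kato_M_fin (d : ℕ) (hd : 2 ≤ d) (p β a : ℝ) (hp : 1 ≤ p) (hβ0 : 0 ≤ β)
    (ha : 0 < a) (hηd : 2*a*p + β < (d:ℝ)) (hgam : -1 < a - (d:ℝ)/2) :
    (⨆ x : EuclideanSpace ℝ (Fin d),
      ∫⁻ z, gaussianResolvent d 1 x z ^ p * ENNReal.ofReal ‖z‖ ^ (-β) ∂volume) < ⊤ := by
  have hp0 : 0 < p := lt_of_lt_of_le one_pos hp
  set c1 : ℝ := p * (Real.sqrt 2)⁻¹ with hc1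
  have hsq2 : 0 < Real.sqrt 2 := Real.sqrt_pos.2 two_pos
  have hc1pos : 0 < c1 := mul_pos hp0 (inv_pos.2 hsq2)
  set J : ℝ≥0∞ := ∫⁻ t in Ioi (0:ℝ), ENNReal.ofReal (Real.exp (-(t/2)) * t ^ (a - (d:ℝ)/2))
    with hJ
  have hJfin : J ≠ ⊤ := (kato_gamma_fin _ hgam).ne
  set C1 : ℝ≥0∞ := ENNReal.ofReal ((2*Real.pi) ^ (-(d:ℝ)/2) * (4*a) ^ a) * (J + 1) with hC1
  have hC1top : C1 ≠ ⊤ := by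
    rw [hC1]
    exact ENNReal.mul_ne_top ENNReal.ofReal_ne_top
      (ENNReal.add_ne_top.2 ⟨hJfin, ENNReal.one_ne_top⟩)
  set Θ : EuclideanSpace ℝ (Fin d) → ℝ≥0∞ := fun w =>
    ENNReal.ofReal (Real.exp (-(c1 * ‖w‖))) * (ENNReal.ofReal ‖w‖) ^ (-(2*a*p)) *
      (ENNReal.ofReal ‖w‖) ^ (-β) with hΘ
  have hΘmeas : Measurable Θ := by
    simp only [hΘ]
    fun_prop
  have hpoint : ∀ x z : EuclideanSpace ℝ (Fin d),
      gaussianResolvent d 1 x z ^ p * ENNReal.ofReal ‖z‖ ^ (-β)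
        ≤ C1 ^ p * (Θ z + Θ (z + -x)) := by
    intro x z
    have hres := kato_resolvent_le d a ha x z
    rw [← hJ, ← hC1] at hres
    have hrp : gaussianResolvent d 1 x z ^ p
        ≤ C1 ^ p * (ENNReal.ofReal (Real.exp (-(c1 * dist x z))) *
            (ENNReal.ofReal (dist x z)) ^ (-(2*a*p))) := by
      have h1 := ENNReal.rpow_le_rpow hres hp0.le
      rw [ENNReal.mul_rpow_of_nonneg C1 _ hp0.le,
        ENNReal.mul_rpow_of_nonneg (ENNReal.ofReal (Real.exp (-(dist x z / Real.sqrt 2))))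
          (ENNReal.ofReal (dist x z) ^ (-(2*a))) hp0.le] at h1
      have hE : (ENNReal.ofReal (Real.exp (-(dist x z / Real.sqrt 2)))) ^ p
          = ENNReal.ofReal (Real.exp (-(c1 * dist x z))) := by
        rw [ENNReal.ofReal_rpow_of_pos (Real.exp_pos _), ← Real.exp_mul]
        congr 1
        rw [hc1, div_eq_mul_inv]
        ring
      have hR' : ((ENNReal.ofReal (dist x z)) ^ (-(2*a))) ^ p
          = (ENNReal.ofReal (dist x z)) ^ (-(2*a*p)) := by
        rw [← ENNReal.rpow_mul]
        congr 1
        ring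
      rw [hE, hR'] at h1
      exact h1
    have hdist : dist x z = ‖z - x‖ := by rw [dist_eq_norm, norm_sub_rev]
    have hw : gaussianResolvent d 1 x z ^ p * ENNReal.ofReal ‖z‖ ^ (-β)
        ≤ C1 ^ p * (ENNReal.ofReal (Real.exp (-(c1 * ‖z - x‖))) *
            (ENNReal.ofReal ‖z - x‖) ^ (-(2*a*p)) * ENNReal.ofReal ‖z‖ ^ (-β)) := by
      calc gaussianResolvent d 1 x z ^ p * ENNReal.ofReal ‖z‖ ^ (-β)
          ≤ (C1 ^ p * (ENNReal.ofReal (Real.exp (-(c1 * dist x z))) *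
              (ENNReal.ofReal (dist x z)) ^ (-(2*a*p)))) * ENNReal.ofReal ‖z‖ ^ (-β) :=
            mul_le_mul_left hrp _
        _ = C1 ^ p * (ENNReal.ofReal (Real.exp (-(c1 * ‖z - x‖))) *
              (ENNReal.ofReal ‖z - x‖) ^ (-(2*a*p)) * ENNReal.ofReal ‖z‖ ^ (-β)) := by
            rw [hdist]; ring
    refine hw.trans ?_
    gcongr C1 ^ p * ?_
    have hzx : z + -x = z - x := (sub_eq_add_neg z x).symm
    rcases le_total ‖z‖ ‖z - x‖ with hcase | hcase
    · refine le_trans ?_ le_self_add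
      simp only [hΘ]
      refine mul_le_mul' (mul_le_mul' ?_ ?_) le_rfl
      · refine ENNReal.ofReal_le_ofReal (Real.exp_le_exp.2 ?_)
        have : c1 * ‖z‖ ≤ c1 * ‖z - x‖ := by nlinarith
        linarith
      · exact kato_rpow_anti (ENNReal.ofReal_le_ofReal hcase) (by positivity)
    · refine le_trans ?_ le_add_self
      rw [hΘ, hzx]
      exact mul_le_mul' le_rfl (kato_rpow_anti (ENNReal.ofReal_le_ofReal hcase) hβ0)
  have hC1p : C1 ^ p ≠ ⊤ := ENNReal.rpow_ne_top_of_nonneg hp0.le hC1top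
  have hint : ∀ x : EuclideanSpace ℝ (Fin d),
      ∫⁻ z, gaussianResolvent d 1 x z ^ p * ENNReal.ofReal ‖z‖ ^ (-β) ∂volume
        ≤ C1 ^ p * (2 * ∫⁻ w, Θ w ∂volume) := by
    intro x
    calc ∫⁻ z, gaussianResolvent d 1 x z ^ p * ENNReal.ofReal ‖z‖ ^ (-β) ∂volume
        ≤ ∫⁻ z, C1 ^ p * (Θ z + Θ (z + -x)) ∂volume := lintegral_mono fun z => hpoint x z
      _ = C1 ^ p * (∫⁻ z, Θ z ∂volume + ∫⁻ z, Θ (z + -x) ∂volume) := by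
          rw [lintegral_const_mul' _ _ hC1p, lintegral_add_left hΘmeas]
      _ = C1 ^ p * (2 * ∫⁻ w, Θ w ∂volume) := by
          rw [lintegral_add_right_eq_self Θ (-x)]
          ring
  refine lt_of_le_of_lt (iSup_le hint) ?_
  refine ENNReal.mul_lt_top hC1p.lt_top ?_
  refine ENNReal.mul_lt_top (by norm_num) ?_
  exact kato_theta_fin d hd c1 (2*a*p) β hc1pos (by positivity) hβ0 hηd

/-! ### Scaling identity for the weighted integral -/

lemma kato_scaling_identity (d : ℕ) (hd : 2 ≤ d) (p β : ℝ) (hp0 : 0 < p) (hβ0 : 0 ≤ β)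
    {α : ℝ} (hα : 0 < α) :
    (⨆ x : EuclideanSpace ℝ (Fin d),
        ∫⁻ y, gaussianResolvent d α x y ^ p * ENNReal.ofReal ‖y‖ ^ (-β) ∂volume)
      = ENNReal.ofReal (α ^ (((d:ℝ)/2 - 1) * p - (d:ℝ)/2 + β/2)) *
        ⨆ x : EuclideanSpace ℝ (Fin d),
          ∫⁻ z, gaussianResolvent d 1 x z ^ p * ENNReal.ofReal ‖z‖ ^ (-β) ∂volume := by
  haveI : NeZero d := ⟨by omega⟩
  have hcpos : 0 < Real.sqrt α := Real.sqrt_pos.2 hα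
  have hint : ∀ x : EuclideanSpace ℝ (Fin d),
      ∫⁻ y, gaussianResolvent d α x y ^ p * ENNReal.ofReal ‖y‖ ^ (-β) ∂volume
        = ENNReal.ofReal (α ^ (((d:ℝ)/2 - 1) * p - (d:ℝ)/2 + β/2)) *
          ∫⁻ z, gaussianResolvent d 1 (Real.sqrt α • x) z ^ p *
            ENNReal.ofReal ‖z‖ ^ (-β) ∂volume := by
    intro x
    have h1 : ∀ y : EuclideanSpace ℝ (Fin d),
        gaussianResolvent d α x y ^ p * ENNReal.ofReal ‖y‖ ^ (-β)
          = ENNReal.ofReal (α ^ (((d:ℝ)/2 - 1) * p)) *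
            (gaussianResolvent d 1 (Real.sqrt α • x) (Real.sqrt α • y) ^ p *
              ENNReal.ofReal ‖y‖ ^ (-β)) := by
      intro y
      rw [kato_resolvent_scaling d hα x y, ENNReal.mul_rpow_of_nonneg _ _ hp0.le,
        ENNReal.ofReal_rpow_of_pos (Real.rpow_pos_of_pos hα _), ← Real.rpow_mul hα.le]
      ring
    rw [lintegral_congr h1, lintegral_const_mul' _ _ ENNReal.ofReal_ne_top]
    set G : EuclideanSpace ℝ (Fin d) → ℝ≥0∞ := fun z =>
      gaussianResolvent d 1 (Real.sqrt α • x) z ^ p *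
        (ENNReal.ofReal ((Real.sqrt α)⁻¹ * ‖z‖)) ^ (-β) with hG
    have h2 : ∀ y : EuclideanSpace ℝ (Fin d),
        gaussianResolvent d 1 (Real.sqrt α • x) (Real.sqrt α • y) ^ p *
          ENNReal.ofReal ‖y‖ ^ (-β) = G (Real.sqrt α • y) := by
      intro y
      simp only [hG]
      congr 3
      rw [norm_smul, Real.norm_eq_abs, abs_of_pos hcpos]
      field_simp
    have hemb : MeasurableEmbedding (fun y : EuclideanSpace ℝ (Fin d) => Real.sqrt α • y) :=
      (Homeomorph.smulOfNeZero (Real.sqrt α) hcpos.ne').measurableEmbedding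
    have hmap : ∫⁻ y, G (Real.sqrt α • y) ∂volume
        = ENNReal.ofReal |((Real.sqrt α : ℝ) ^ d)⁻¹| * ∫⁻ z, G z ∂volume := by
      calc ∫⁻ y, G (Real.sqrt α • y) ∂volume
          = ∫⁻ z, G z ∂(Measure.map (fun y : EuclideanSpace ℝ (Fin d) => Real.sqrt α • y) volume) :=
            (hemb.lintegral_map G).symm
        _ = ENNReal.ofReal |((Real.sqrt α : ℝ) ^ d)⁻¹| * ∫⁻ z, G z ∂volume := by
            rw [Measure.map_addHaar_smul volume hcpos.ne', finrank_euclideanSpace_fin,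
              lintegral_smul_measure, smul_eq_mul]
    have h3 : ∫⁻ z, G z ∂volume
        = ENNReal.ofReal ((Real.sqrt α) ^ β) *
          ∫⁻ z, gaussianResolvent d 1 (Real.sqrt α • x) z ^ p *
            ENNReal.ofReal ‖z‖ ^ (-β) ∂volume := by
      rw [← lintegral_const_mul' _ _ ENNReal.ofReal_ne_top]
      refine lintegral_congr_ae ?_
      have h0 : ∀ᵐ z : EuclideanSpace ℝ (Fin d) ∂volume, z ≠ 0 := by
        rw [ae_iff]
        simp only [ne_eq, not_not, setOf_eq_eq_singleton]
        exact measure_singleton 0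
      filter_upwards [h0] with z hz
      simp only [hG]
      have hnz : ENNReal.ofReal ‖z‖ ≠ 0 := (ENNReal.ofReal_pos.2 (norm_pos_iff.2 hz)).ne'
      have hinv : ENNReal.ofReal ((Real.sqrt α)⁻¹) ≠ 0 :=
        (ENNReal.ofReal_pos.2 (inv_pos.2 hcpos)).ne'
      rw [ENNReal.ofReal_mul (inv_pos.2 hcpos).le,
        ENNReal.mul_rpow_of_ne_zero hinv hnz,
        ENNReal.ofReal_rpow_of_pos (inv_pos.2 hcpos),
        Real.inv_rpow hcpos.le, Real.rpow_neg hcpos.le, inv_inv]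
      ring
    rw [lintegral_congr h2, hmap, h3, ← mul_assoc, ← mul_assoc,
      ← ENNReal.ofReal_mul (by positivity), ← ENNReal.ofReal_mul (by positivity)]
    have hsd : (Real.sqrt α : ℝ) ^ d = α ^ ((d:ℝ)/2) := by
      rw [Real.sqrt_eq_rpow, ← Real.rpow_natCast (α ^ ((1:ℝ)/2)) d, ← Real.rpow_mul hα.le]
      congr 1
      ring
    have hsb : (Real.sqrt α : ℝ) ^ β = α ^ (β/2) := by
      rw [Real.sqrt_eq_rpow, ← Real.rpow_mul hα.le]
      congr 1
      ring
    have habs : |((Real.sqrt α : ℝ) ^ d)⁻¹| = α ^ (-((d:ℝ)/2)) := by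
      rw [hsd, abs_of_pos (inv_pos.2 (Real.rpow_pos_of_pos hα _)), ← Real.rpow_neg hα.le]
    congr 2
    rw [habs, hsb, ← Real.rpow_add hα, ← Real.rpow_add hα]
    ring
  have hsurj : Function.Surjective (fun x : EuclideanSpace ℝ (Fin d) => Real.sqrt α • x) := by
    intro z
    refine ⟨(Real.sqrt α)⁻¹ • z, ?_⟩
    show Real.sqrt α • ((Real.sqrt α)⁻¹ • z) = z
    rw [smul_smul, mul_inv_cancel₀ hcpos.ne', one_smul]
  calc (⨆ x : EuclideanSpace ℝ (Fin d),
        ∫⁻ y, gaussianResolvent d α x y ^ p * ENNReal.ofReal ‖y‖ ^ (-β) ∂volume)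
      = ⨆ x : EuclideanSpace ℝ (Fin d),
          ENNReal.ofReal (α ^ (((d:ℝ)/2 - 1) * p - (d:ℝ)/2 + β/2)) *
            ∫⁻ z, gaussianResolvent d 1 (Real.sqrt α • x) z ^ p *
              ENNReal.ofReal ‖z‖ ^ (-β) ∂volume := iSup_congr hint
    _ = ENNReal.ofReal (α ^ (((d:ℝ)/2 - 1) * p - (d:ℝ)/2 + β/2)) *
          ⨆ x : EuclideanSpace ℝ (Fin d),
            ∫⁻ z, gaussianResolvent d 1 (Real.sqrt α • x) z ^ p *
              ENNReal.ofReal ‖z‖ ^ (-β) ∂volume := (ENNReal.mul_iSup _ _).symm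
    _ = _ := by
        congr 1
        exact hsurj.iSup_comp (g := fun x' : EuclideanSpace ℝ (Fin d) =>
          ∫⁻ z, gaussianResolvent d 1 x' z ^ p * ENNReal.ofReal ‖z‖ ^ (-β) ∂volume)

theorem stmt_15 (d : ℕ) (hd : 2 ≤ d) (p : ℝ) (hp : 1 ≤ p)
    (hpd : 0 < (d:ℝ) - p * ((d:ℝ) - 2))
    (β : ℝ) (hβ0 : 0 ≤ β) (hβ : β < (d:ℝ) - p * ((d:ℝ) - 2)) :
    Tendsto (fun α : ℝ =>
        ⨆ x : EuclideanSpace ℝ (Fin d),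
          ∫⁻ y, gaussianResolvent d α x y ^ p * ENNReal.ofReal ‖y‖ ^ (-β) ∂(volume))
        atTop (nhds 0) := by
  have hp0 : 0 < p := lt_of_lt_of_le one_pos hp
  have hd2 : (2:ℝ) ≤ (d:ℝ) := by exact_mod_cast hd
  set q : ℝ := ((d:ℝ) - β) / (2*p) with hqdef
  have hdβ : 0 < (d:ℝ) - β := by nlinarith
  have hq0 : 0 < q := div_pos hdβ (by positivity)
  have hq1 : (d:ℝ)/2 - 1 < q := by
    rw [hqdef, lt_div_iff₀ (by positivity)]
    nlinarith
  set a : ℝ := (max ((d:ℝ)/2 - 1) 0 + q) / 2 with hadef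
  have hamax : max ((d:ℝ)/2 - 1) 0 < q := max_lt hq1 hq0
  have ha : 0 < a := by
    have h := le_max_right ((d:ℝ)/2 - 1) 0
    rw [hadef]; linarith
  have haq : a < q := by rw [hadef]; linarith
  have hagam : -1 < a - (d:ℝ)/2 := by
    have h := le_max_left ((d:ℝ)/2 - 1) 0
    rw [hadef]; linarith
  have hηd : 2*a*p + β < (d:ℝ) := by
    have h2 : a * (2*p) < (d:ℝ) - β := by
      rw [hqdef] at haq
      exact (lt_div_iff₀ (by positivity)).1 haq
    nlinarith
  have hMfin := kato_M_fin d hd p β a hp hβ0 ha hηd hagam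
  have hepos : 0 < -(((d:ℝ)/2 - 1) * p - (d:ℝ)/2 + β/2) := by nlinarith
  have hev : (fun α : ℝ => ⨆ x : EuclideanSpace ℝ (Fin d),
      ∫⁻ y, gaussianResolvent d α x y ^ p * ENNReal.ofReal ‖y‖ ^ (-β) ∂volume)
      =ᶠ[atTop] fun α : ℝ =>
        ENNReal.ofReal (α ^ (((d:ℝ)/2 - 1) * p - (d:ℝ)/2 + β/2)) *
          ⨆ x : EuclideanSpace ℝ (Fin d),
            ∫⁻ z, gaussianResolvent d 1 x z ^ p * ENNReal.ofReal ‖z‖ ^ (-β) ∂volume := by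
    filter_upwards [eventually_gt_atTop (0:ℝ)] with α hα
    exact kato_scaling_identity d hd p β hp0 hβ0 hα
  have h1 : Tendsto (fun α : ℝ => α ^ (((d:ℝ)/2 - 1) * p - (d:ℝ)/2 + β/2)) atTop (nhds 0) := by
    have h := tendsto_rpow_neg_atTop hepos
    simpa using h
  have h2 : Tendsto (fun α : ℝ =>
      ENNReal.ofReal (α ^ (((d:ℝ)/2 - 1) * p - (d:ℝ)/2 + β/2)) *
        ⨆ x : EuclideanSpace ℝ (Fin d),
          ∫⁻ z, gaussianResolvent d 1 x z ^ p * ENNReal.ofReal ‖z‖ ^ (-β) ∂volume)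
      atTop (nhds 0) := by
    have h3 := ENNReal.Tendsto.mul_const (ENNReal.tendsto_ofReal h1) (Or.inr hMfin.ne)
    simpa using h3
  exact h2.congr' hev.symm
end

section
/- Let d ≥ 1 be an integer and p ∈ [1,∞) with 2p − d(p−1) > 0. Then for every t > 0, ∫_{ℝ^d} ( ∫_0^t (2πs)^{−d/2} e^{−|x|²/(2s)} ds )^p dx ≤ (2π)^{−d(p−1)/2} · p^{−d/2} · ( 2p/(2p − d(p−1)) )^p · t^{(2p − d(p−1))/2}. -/
open MeasureTheory ENNReal Set Filter
open Real

private lemma jensen_aux {α} [MeasurableSpace α] {μ : Measure α} {w h : α → ℝ≥0∞}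
    (hw : AEMeasurable w μ) (hh : AEMeasurable h μ) {p : ℝ} (hp : 1 ≤ p) :
    (∫⁻ a, w a * h a ∂μ) ^ p ≤ (∫⁻ a, w a * h a ^ p ∂μ) * (∫⁻ a, w a ∂μ) ^ (p - 1) := by
  have hp0 : 0 < p := lt_of_lt_of_le one_pos hp
  have hq0 : 0 ≤ 1 - 1/p := by
    have : 1/p ≤ 1 := by rw [div_le_one hp0]; exact hp
    linarith
  have h1 : ∫⁻ a, w a * h a ∂μ ≤
      (∫⁻ a, w a * h a ^ p ∂μ) ^ (1/p) * (∫⁻ a, w a ∂μ) ^ (1 - 1/p) := by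
    have key := lintegral_mul_norm_pow_le (μ := μ) (f := fun a => w a * h a ^ p) (g := w)
      (p := 1/p) (q := 1 - 1/p) (hw.mul (hh.pow_const p)) hw (by positivity) hq0 (by ring)
    refine le_trans (le_of_eq ?_) key
    refine lintegral_congr fun a => ?_
    rw [ENNReal.mul_rpow_of_nonneg _ _ (by positivity : (0:ℝ) ≤ 1/p), ← ENNReal.rpow_mul,
      mul_one_div_cancel hp0.ne', ENNReal.rpow_one, mul_right_comm,
      ← ENNReal.rpow_add_of_nonneg _ _ (by positivity) hq0]
    rw [add_sub_cancel, ENNReal.rpow_one]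
  calc (∫⁻ a, w a * h a ∂μ) ^ p
      ≤ ((∫⁻ a, w a * h a ^ p ∂μ) ^ (1/p) * (∫⁻ a, w a ∂μ) ^ (1 - 1/p)) ^ p :=
        ENNReal.rpow_le_rpow h1 hp0.le
    _ = (∫⁻ a, w a * h a ^ p ∂μ) * (∫⁻ a, w a ∂μ) ^ (p - 1) := by
        rw [ENNReal.mul_rpow_of_nonneg _ _ hp0.le, ← ENNReal.rpow_mul, ← ENNReal.rpow_mul,
          one_div_mul_cancel hp0.ne', ENNReal.rpow_one]
        congr 2
        field_simp

private lemma rpow_int_aux {r : ℝ} (hr : -1 < r) {t : ℝ} (ht : 0 < t) :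
    ∫⁻ s in Set.Ioc (0:ℝ) t, ENNReal.ofReal (s ^ r) =
      ENNReal.ofReal (t ^ (r+1) / (r+1)) := by
  rw [← ofReal_integral_eq_lintegral_ofReal]
  · congr 1
    rw [← intervalIntegral.integral_of_le ht.le, integral_rpow (Or.inl hr)]
    rw [Real.zero_rpow (by linarith : r + 1 ≠ 0), sub_zero]
  · rw [show Integrable _ _ = IntegrableOn (fun s : ℝ => s ^ r) (Ioc 0 t) volume from rfl,
      ← intervalIntegrable_iff_integrableOn_Ioc_of_le ht.le]
    exact intervalIntegral.intervalIntegrable_rpow' hr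
  · exact (ae_restrict_iff' measurableSet_Ioc).2
      (ae_of_all _ fun s hs => Real.rpow_nonneg hs.1.le r)

private lemma gauss_aux (d : ℕ) {b : ℝ} (hb : 0 < b) :
    ∫⁻ x : EuclideanSpace ℝ (Fin d), ENNReal.ofReal (Real.exp (-b * ‖x‖ ^ 2)) =
      ENNReal.ofReal ((π / b) ^ ((d:ℝ) / 2)) := by
  have hint : Integrable (fun x : EuclideanSpace ℝ (Fin d) => Real.exp (-b * ‖x‖ ^ 2)) := by
    have h1 := (GaussianFourier.integrable_cexp_neg_mul_sq_norm_add
      (V := EuclideanSpace ℝ (Fin d)) (b := (b:ℂ)) (by simpa using hb) 0 0).norm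
    refine h1.congr (ae_of_all _ fun v => ?_)
    simp
    norm_cast
    exact Real.norm_of_nonneg (Real.exp_pos _).le
  rw [← ofReal_integral_eq_lintegral_ofReal hint
    (ae_of_all _ fun x => (Real.exp_pos _).le)]
  congr 1
  have := GaussianFourier.integral_rexp_neg_mul_sq_norm (V := EuclideanSpace ℝ (Fin d)) hb
  rw [this, finrank_euclideanSpace_fin]

theorem stmt_17 (d : ℕ) (hd : 1 ≤ d) (p : ℝ) (hp : 1 ≤ p)
    (hpd : 0 < 2 * p - (d:ℝ) * (p - 1)) (t : ℝ) (ht : 0 < t) :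
    ∫⁻ x : EuclideanSpace ℝ (Fin d),
        (∫⁻ s in Set.Ioc (0:ℝ) t,
          ENNReal.ofReal ((2 * Real.pi * s) ^ (-(d:ℝ) / 2) *
            Real.exp (-(‖x‖ ^ 2) / (2 * s)))) ^ p ∂(volume)
      ≤ ENNReal.ofReal ((2 * Real.pi) ^ (-(d:ℝ) * (p - 1) / 2) *
          p ^ (-(d:ℝ) / 2) *
          (2 * p / (2 * p - (d:ℝ) * (p - 1))) ^ p *
          t ^ ((2 * p - (d:ℝ) * (p - 1)) / 2)) := by
  have hp0 : 0 < p := lt_of_lt_of_le one_pos hp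
  set β : ℝ := (d:ℝ) * (p - 1) / (2 * p) with hβ
  have hd0 : (0:ℝ) < d := by exact_mod_cast hd
  have hβ0 : 0 ≤ β := by
    apply div_nonneg
    · nlinarith
    · linarith
  have hβ1 : β < 1 := by
    rw [hβ, div_lt_one (by linarith : (0:ℝ) < 2 * p)]
    linarith
  have h2π : (0:ℝ) < 2 * π := by positivity
  set K : ℝ := (2 * π) ^ (-(d:ℝ) * (p - 1) / 2) * p ^ (-(d:ℝ) / 2) with hK
  set T : ℝ := t ^ (1 - β) / (1 - β) with hT
  have hT0 : 0 < T := by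
    apply div_pos (Real.rpow_pos_of_pos ht _) (by linarith)
  set w : ℝ → ℝ≥0∞ := fun s => ENNReal.ofReal (s ^ (-β)) with hw
  set h : ℝ → EuclideanSpace ℝ (Fin d) → ℝ≥0∞ := fun s x =>
    ENNReal.ofReal (s ^ β * ((2 * π * s) ^ (-(d:ℝ) / 2) *
      Real.exp (-(‖x‖ ^ 2) / (2 * s)))) with hh
  have mw : Measurable w := by
    rw [hw]; fun_prop
  have mh : Measurable (fun z : EuclideanSpace ℝ (Fin d) × ℝ => h z.2 z.1) := by
    simp only [hh]; fun_prop
  -- value of ∫ w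
  have hA : ∫⁻ s in Set.Ioc (0:ℝ) t, w s = ENNReal.ofReal T := by
    rw [hw]
    have := rpow_int_aux (r := -β) (by linarith) ht
    rw [this]
    congr 1
    rw [hT, neg_add_eq_sub]
  have hAfin : (∫⁻ s in Set.Ioc (0:ℝ) t, w s) ^ (p - 1) ≠ ∞ := by
    rw [hA]
    exact ENNReal.rpow_ne_top_of_nonneg (by linarith) ofReal_ne_top
  -- key real identity
  have hkey : ∀ s : ℝ, 0 < s →
      s ^ (-β) * ((s ^ β * (2 * π * s) ^ (-(d:ℝ) / 2)) ^ p *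
        (π / (p / (2 * s))) ^ ((d:ℝ) / 2)) = K * s ^ (-β) := by
    intro s hs
    have h2πs : (0:ℝ) < 2 * π * s := by positivity
    have hπp : (0:ℝ) < π / (p / (2 * s)) := by positivity
    have e1 : Real.log (π / (p / (2 * s))) = Real.log (2 * π * s) - Real.log p := by
      rw [show π / (p / (2 * s)) = (2 * π * s) / p by field_simp,
        Real.log_div h2πs.ne' hp0.ne']
    have e2 : Real.log (2 * π * s) = Real.log (2 * π) + Real.log s :=
      Real.log_mul h2π.ne' hs.ne'
    rw [hK]
    simp only [Real.rpow_def_of_pos hs, Real.rpow_def_of_pos h2πs, Real.rpow_def_of_pos hπp,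
      Real.rpow_def_of_pos h2π, Real.rpow_def_of_pos hp0, ← Real.exp_add, ← Real.exp_mul,
      Real.exp_eq_exp]
    rw [e1, e2, hβ]
    field_simp
    ring
  calc ∫⁻ x : EuclideanSpace ℝ (Fin d),
        (∫⁻ s in Set.Ioc (0:ℝ) t,
          ENNReal.ofReal ((2 * π * s) ^ (-(d:ℝ) / 2) *
            Real.exp (-(‖x‖ ^ 2) / (2 * s)))) ^ p ∂volume
      = ∫⁻ x : EuclideanSpace ℝ (Fin d),
          (∫⁻ s in Set.Ioc (0:ℝ) t, w s * h s x) ^ p ∂volume := by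
        refine lintegral_congr fun x => ?_
        congr 1
        refine setLIntegral_congr_fun measurableSet_Ioc (fun s hs => ?_)
        rw [hw, hh]
        dsimp only
        rw [← ENNReal.ofReal_mul (Real.rpow_nonneg hs.1.le _), ← mul_assoc,
          ← Real.rpow_add hs.1, neg_add_cancel, Real.rpow_zero, one_mul]
    _ ≤ ∫⁻ x : EuclideanSpace ℝ (Fin d),
          ((∫⁻ s in Set.Ioc (0:ℝ) t, w s * h s x ^ p) *
            (∫⁻ s in Set.Ioc (0:ℝ) t, w s) ^ (p - 1)) ∂volume := by
        refine lintegral_mono fun x => ?_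
        exact jensen_aux mw.aemeasurable
          ((mh.comp (measurable_const.prodMk measurable_id)).aemeasurable) hp
    _ = (∫⁻ x : EuclideanSpace ℝ (Fin d), ∫⁻ s in Set.Ioc (0:ℝ) t, w s * h s x ^ p ∂volume)
          * (∫⁻ s in Set.Ioc (0:ℝ) t, w s) ^ (p - 1) :=
        lintegral_mul_const' _ _ hAfin
    _ = (∫⁻ s in Set.Ioc (0:ℝ) t, ∫⁻ x : EuclideanSpace ℝ (Fin d), w s * h s x ^ p ∂volume)
          * (∫⁻ s in Set.Ioc (0:ℝ) t, w s) ^ (p - 1) := by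
        congr 1
        exact lintegral_lintegral_swap
          (((mw.comp measurable_snd).mul ((mh.pow_const p))).aemeasurable)
    _ = (∫⁻ s in Set.Ioc (0:ℝ) t, ENNReal.ofReal (K * s ^ (-β)))
          * (∫⁻ s in Set.Ioc (0:ℝ) t, w s) ^ (p - 1) := by
        congr 1
        refine setLIntegral_congr_fun measurableSet_Ioc (fun s hs => ?_)
        have hs0 : (0:ℝ) < s := hs.1
        have hb : (0:ℝ) < p / (2 * s) := by positivity
        have step1 : ∀ x : EuclideanSpace ℝ (Fin d), h s x ^ p =
            ENNReal.ofReal ((s ^ β * (2 * π * s) ^ (-(d:ℝ) / 2)) ^ p *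
              Real.exp (-(p / (2 * s)) * ‖x‖ ^ 2)) := by
          intro x
          rw [hh]
          dsimp only
          rw [ENNReal.ofReal_rpow_of_nonneg (by positivity) hp0.le]
          congr 1
          rw [← mul_assoc, Real.mul_rpow (by positivity) (Real.exp_pos _).le,
            ← Real.exp_mul]
          congr 2
          ring
        calc ∫⁻ x : EuclideanSpace ℝ (Fin d), w s * h s x ^ p ∂volume
            = w s * ∫⁻ x : EuclideanSpace ℝ (Fin d), h s x ^ p ∂volume :=
              lintegral_const_mul' _ _ ofReal_ne_top
          _ = w s * (ENNReal.ofReal ((s ^ β * (2 * π * s) ^ (-(d:ℝ) / 2)) ^ p) *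
                ∫⁻ x : EuclideanSpace ℝ (Fin d),
                  ENNReal.ofReal (Real.exp (-(p / (2 * s)) * ‖x‖ ^ 2)) ∂volume) := by
              congr 1
              rw [← lintegral_const_mul' _ _ ofReal_ne_top]
              refine lintegral_congr fun x => ?_
              rw [step1 x, ENNReal.ofReal_mul (by positivity)]
          _ = w s * (ENNReal.ofReal ((s ^ β * (2 * π * s) ^ (-(d:ℝ) / 2)) ^ p) *
                ENNReal.ofReal ((π / (p / (2 * s))) ^ ((d:ℝ) / 2))) := by
              rw [gauss_aux d hb]
          _ = ENNReal.ofReal (K * s ^ (-β)) := by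
              rw [hw]
              dsimp only
              rw [← ENNReal.ofReal_mul (by positivity), ← ENNReal.ofReal_mul (by positivity),
                ← mul_assoc]
              rw [mul_assoc (s ^ (-β))]
              rw [hkey s hs0]
    _ = (ENNReal.ofReal K * ENNReal.ofReal T) * ENNReal.ofReal T ^ (p - 1) := by
        rw [hA]
        congr 1
        have : ∀ s : ℝ, ENNReal.ofReal (K * s ^ (-β)) =
            ENNReal.ofReal K * ENNReal.ofReal (s ^ (-β)) := fun s =>
          ENNReal.ofReal_mul (by positivity)
        simp_rw [this]
        rw [lintegral_const_mul' _ _ ofReal_ne_top]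
        congr 1
    _ = ENNReal.ofReal (K * T * T ^ (p - 1)) := by
        rw [ENNReal.ofReal_rpow_of_pos hT0, ← ENNReal.ofReal_mul (by positivity),
          ← ENNReal.ofReal_mul (by positivity)]
    _ = ENNReal.ofReal ((2 * π) ^ (-(d:ℝ) * (p - 1) / 2) *
          p ^ (-(d:ℝ) / 2) *
          (2 * p / (2 * p - (d:ℝ) * (p - 1))) ^ p *
          t ^ ((2 * p - (d:ℝ) * (p - 1)) / 2)) := by
        congr 1
        have hTP : T * T ^ (p - 1) = T ^ p := by
          nth_rewrite 1 [← Real.rpow_one T]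
          rw [← Real.rpow_add hT0]
          norm_num
        rw [mul_assoc, hTP, hK]
        have hTeq : T ^ p = (2 * p / (2 * p - (d:ℝ) * (p - 1))) ^ p *
            t ^ ((2 * p - (d:ℝ) * (p - 1)) / 2) := by
          have h1 : T = t ^ ((2 * p - (d:ℝ) * (p - 1)) / (2 * p)) *
              (2 * p / (2 * p - (d:ℝ) * (p - 1))) := by
            rw [hT, div_eq_mul_inv]
            congr 1
            · congr 1
              rw [hβ]; field_simp
            · rw [hβ]
              rw [inv_eq_one_div]
              rw [div_eq_div_iff (by linarith) hpd.ne']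
              field_simp
          rw [h1, Real.mul_rpow (by positivity) (by positivity),
            ← Real.rpow_mul ht.le, mul_comm]
          congr 2
          field_simp
        rw [hTeq]
        ring
end
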